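/- Suppose p > q > 0 and (T_1,…,T_K) satisfies the balance equations of the block-model Dirichlet problem for label 1, with mean temperature \bar T = (s_1 + Σ_{j=1}^K (n_j − s_j)·T_j)/N. Then \bar T · (1 − Σ_{k=1}^K (n_k − s_k)·q/(s_k(p−q) + Nq)) = (s_1/N) · (n_1(p−q) + Nq)/(s_1(p−q) + Nq). (All denominators s_k(p−q) + Nq are positive since p > q > 0 and N ≥ 1.) -/

import Mathlib

open Finset

/-- In the block model with `p > q > 0`, if `T` satisfies the balance
equations of the Dirichlet problem for label 1 (block 1 indexed by `i1`) and
`T̄ = (s₁ + ∑ j (n j − s j)·T j)/N`, then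
`T̄ · (1 − ∑ k (n_k − s_k)·q/(s_k(p−q) + Nq))
  = (s₁/N) · (n₁(p−q) + Nq)/(s₁(p−q) + Nq)`. -/
theorem dirichlet_block_model_mean_formula
    (K : ℕ) (n s : Fin K → ℕ)
    (hn : ∀ k, 1 ≤ n k) (hs : ∀ k, s k ≤ n k)
    (p q : ℝ) (hpq : p > q) (hq : q > 0)
    (i1 : Fin K) (T : Fin K → ℝ)
    (N : ℕ) (hN : N = ∑ k, n k)
    (hbal : ∀ k, ((n k : ℝ) * (p - q) + (N : ℝ) * q) * T k
      = (if k = i1 then (s i1 : ℝ) * p else (s i1 : ℝ) * q)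
        + ((n k : ℝ) - (s k : ℝ)) * p * T k
        + ∑ j ∈ univ.erase k, ((n j : ℝ) - (s j : ℝ)) * q * T j)
    (Tbar : ℝ)
    (hTbar : Tbar = ((s i1 : ℝ) + ∑ j, ((n j : ℝ) - (s j : ℝ)) * T j) / (N : ℝ)) :
    Tbar * (1 - ∑ k, ((n k : ℝ) - (s k : ℝ)) * q / ((s k : ℝ) * (p - q) + (N : ℝ) * q))
      = ((s i1 : ℝ) / (N : ℝ))
        * (((n i1 : ℝ) * (p - q) + (N : ℝ) * q)
            / ((s i1 : ℝ) * (p - q) + (N : ℝ) * q)) := by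
  have hNpos : 0 < (N : ℝ) := by
    have h1 : (1:ℕ) ≤ N := by
      rw [hN]
      calc 1 ≤ n i1 := hn i1
        _ ≤ ∑ k, n k := Finset.single_le_sum (fun k _ => Nat.zero_le _) (mem_univ i1)
    exact_mod_cast h1
  have hDpos : ∀ k, 0 < (s k : ℝ) * (p - q) + (N : ℝ) * q := by
    intro k
    have h0 : (0:ℝ) ≤ (s k : ℝ) := Nat.cast_nonneg _
    nlinarith
  set S : ℝ := ∑ j, ((n j : ℝ) - (s j : ℝ)) * q * T j with hSdef
  -- simplified balance: D k * T k = h k + S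
  have hH : ∀ k, ((s k : ℝ) * (p - q) + (N : ℝ) * q) * T k
      = (if k = i1 then (s i1 : ℝ) * p else (s i1 : ℝ) * q) + S := by
    intro k
    have hb := hbal k
    have herase : ∑ j ∈ univ.erase k, ((n j : ℝ) - (s j : ℝ)) * q * T j
        = S - ((n k : ℝ) - (s k : ℝ)) * q * T k := by
      rw [hSdef, ← Finset.add_sum_erase univ _ (mem_univ k)]; ring
    rw [herase] at hb
    linear_combination hb
  set A : ℝ := ∑ k, ((n k : ℝ) - (s k : ℝ)) * q / ((s k : ℝ) * (p - q) + (N : ℝ) * q)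
    with hAdef
  -- S (1 - A) = ∑ (n_k - s_k) q h_k / D_k
  have hkey : S * (1 - A)
      = ∑ k, ((n k : ℝ) - (s k : ℝ)) * q
          * (if k = i1 then (s i1 : ℝ) * p else (s i1 : ℝ) * q)
          / ((s k : ℝ) * (p - q) + (N : ℝ) * q) := by
    have : S * (1 - A) = ∑ k, (((n k : ℝ) - (s k : ℝ)) * q * T k
        - S * (((n k : ℝ) - (s k : ℝ)) * q / ((s k : ℝ) * (p - q) + (N : ℝ) * q))) := by
      rw [Finset.sum_sub_distrib, ← Finset.mul_sum, ← hSdef, ← hAdef]; ring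
    rw [this]
    apply Finset.sum_congr rfl
    intro k _
    have hDk := (hDpos k).ne'
    have hHk := hH k
    generalize (if k = i1 then (s i1 : ℝ) * p else (s i1 : ℝ) * q) = h at hHk ⊢
    field_simp
    rw [show T k = (h + S) / ((s k : ℝ) * (p - q) + (N : ℝ) * q) from by
      rw [eq_div_iff hDk]; linear_combination hHk]
    ring
  -- split the sum at i1
  have hsplit : ∑ k, ((n k : ℝ) - (s k : ℝ)) * q
          * (if k = i1 then (s i1 : ℝ) * p else (s i1 : ℝ) * q)
          / ((s k : ℝ) * (p - q) + (N : ℝ) * q)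
      = (s i1 : ℝ) * q * A
        + (s i1 : ℝ) * ((n i1 : ℝ) - (s i1 : ℝ)) * q * (p - q)
            / ((s i1 : ℝ) * (p - q) + (N : ℝ) * q) := by
    have h1 : ∀ k, ((n k : ℝ) - (s k : ℝ)) * q
          * (if k = i1 then (s i1 : ℝ) * p else (s i1 : ℝ) * q)
          / ((s k : ℝ) * (p - q) + (N : ℝ) * q)
        = (s i1 : ℝ) * q * (((n k : ℝ) - (s k : ℝ)) * q
            / ((s k : ℝ) * (p - q) + (N : ℝ) * q))
          + (if k = i1 then (s i1 : ℝ) * ((n i1 : ℝ) - (s i1 : ℝ)) * q * (p - q)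
              / ((s i1 : ℝ) * (p - q) + (N : ℝ) * q) else 0) := by
      intro k
      by_cases hk : k = i1
      · subst hk; rw [if_pos rfl, if_pos rfl]
        have hDk := (hDpos k).ne'
        field_simp
        ring
      · simp only [if_neg hk]
        ring
    simp only [h1, Finset.sum_add_distrib, ← Finset.mul_sum, ← hAdef,
      Finset.sum_ite_eq', mem_univ, if_pos]
  rw [hsplit] at hkey
  -- express Tbar in terms of S
  have hsumT : ∑ j, ((n j : ℝ) - (s j : ℝ)) * T j = S / q := by
    rw [hSdef, Finset.sum_div]
    apply Finset.sum_congr rfl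
    intro j _
    field_simp
  rw [hsumT] at hTbar
  have hD1 := (hDpos i1).ne'
  have hkey2 : S * (1 - A) * ((s i1 : ℝ) * (p - q) + (N : ℝ) * q)
      = (s i1 : ℝ) * q * A * ((s i1 : ℝ) * (p - q) + (N : ℝ) * q)
        + (s i1 : ℝ) * ((n i1 : ℝ) - (s i1 : ℝ)) * q * (p - q) := by
    rw [hkey, add_mul, div_mul_cancel₀ _ hD1]
  have hmain : ((s i1 : ℝ) * q + S) * (1 - A) * ((s i1 : ℝ) * (p - q) + (N : ℝ) * q)
      = (s i1 : ℝ) * q * ((n i1 : ℝ) * (p - q) + (N : ℝ) * q) := by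
    linear_combination hkey2
  rw [hTbar]
  field_simp
  rw [eq_div_iff (ne_of_gt (by linarith [hDpos i1]))]
  linear_combination hmain
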